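/- For natural numbers N, K, M, E with E = K - 1, K ≥ 1, and N ≥ K: if C(N, K) ≤ M · C(N, K-1), then N ≤ K·M + E. -/
import Mathlib

theorem stmt_1 (N K M E : ℕ) (hE : E = K - 1) (hK : 1 ≤ K) (hN : K ≤ N)
    (h : N.choose K ≤ M * N.choose (K - 1)) : N ≤ K * M + E := by
  obtain ⟨k, rfl⟩ : ∃ k, K = k + 1 := ⟨K - 1, (Nat.succ_pred_eq_of_pos hK).symm⟩
  simp only [Nat.add_sub_cancel] at hE h

  have key : N.choose (k + 1) * (k + 1) = N.choose k * (N - k) :=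
    Nat.choose_succ_right_eq N k
  have hpos : 0 < N.choose k := Nat.choose_pos (le_trans (Nat.le_succ k) hN)
  have h2 : N.choose k * (N - k) ≤ N.choose k * ((k + 1) * M) := by
    rw [← key]
    calc N.choose (k + 1) * (k + 1) ≤ M * N.choose k * (k + 1) :=
          Nat.mul_le_mul_right _ h
      _ = N.choose k * ((k + 1) * M) := by ring
  have h3 : N - k ≤ (k + 1) * M := Nat.le_of_mul_le_mul_left (by linarith [h2]) hpos
  omega
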